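/- In a commutative group G, for any r ≥ 1 and any a₁,…,a_{2^r} ∈ G, the fully balanced bracketing (…(e_{a₁}e_{a₂})…(e_{a_{2^r−1}}e_{a_{2^r}})…) in A_G(f,t) equals the product ∏_{k=0}^{r−1} ∏_{s=0}^{2^{r−k−1}−1} f( t^{2^k−1} ∘ ∏_{q=1}^{2^k} a_{2^{k+1}s+q}, t^{2^k−1} ∘ ∏_{l=1}^{2^k} a_{2^{k+1}s+2^k+l} ) times the basis element e_{t^{2^r−1} ∘ ∏_{i=1}^{2^r} a_i}. -/
import Mathlib


open Finsupp

/-- Multiplication of the algebra `A_G(f,t)`: `e_a e_b = f(a,b) e_{a∘b∘t}`. -/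
noncomputable def mulG {K G : Type*} [Field K] [CommGroup G] (f : G → G → K) (t : G)
    (x y : G →₀ K) : G →₀ K :=
  x.sum fun a xa => y.sum fun b yb => Finsupp.single (a * b * t) (xa * yb * f a b)

/-- The fully balanced bracketing of the `2^r` basis elements `e_{a 1}, …, e_{a (2^r)}`:
`bal f t a 0 = e_{a 1}` and
`bal f t a (r+1) = (bal of the first 2^r elements) * (bal of the last 2^r elements)`. -/
noncomputable def bal {K G : Type*} [Field K] [CommGroup G] (f : G → G → K) (t : G)
    (a : ℕ → G) : ℕ → (G →₀ K)
  | 0 => Finsupp.single (a 1) 1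
  | r + 1 => mulG f t (bal f t a r) (bal f t (fun i => a (2 ^ r + i)) r)

lemma mulG_single {K G : Type*} [Field K] [CommGroup G] (f : G → G → K) (t : G)
    (g h : G) (c d : K) :
    mulG f t (Finsupp.single g c) (Finsupp.single h d)
      = Finsupp.single (g * h * t) (c * d * f g h) := by
  unfold mulG
  rw [Finsupp.sum_single_index (by simp), Finsupp.sum_single_index (by simp)]

lemma prod_Icc_one_add {G : Type*} [CommMonoid G] (b : ℕ → G) (m n : ℕ) :
    ∏ i ∈ Finset.Icc 1 (m + n), b i
      = (∏ i ∈ Finset.Icc 1 m, b i) * ∏ i ∈ Finset.Icc 1 n, b (m + i) := by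
  have h : ∀ k : ℕ, ∀ c : ℕ → G, ∏ i ∈ Finset.Icc 1 k, c i = ∏ i ∈ Finset.range k, c (1 + i) := by
    intro k c
    rw [← Finset.Ico_add_one_right_eq_Icc, Finset.prod_Ico_eq_prod_range]
    simp
  rw [h, h, h, Finset.prod_range_add]
  refine congrArg _ (Finset.prod_congr rfl fun i _ => ?_)
  congr 1
  omega

lemma bal_formula {K G : Type*} [Field K] [CommGroup G] (f : G → G → K) (t : G)
    (r : ℕ) (a : ℕ → G) :
    bal f t a r =
      (∏ k ∈ Finset.range r, ∏ s ∈ Finset.range (2 ^ (r - k - 1)),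
          f (t ^ (2 ^ k - 1) * ∏ q ∈ Finset.Icc 1 (2 ^ k), a (2 ^ (k + 1) * s + q))
            (t ^ (2 ^ k - 1) *
              ∏ l ∈ Finset.Icc 1 (2 ^ k), a (2 ^ (k + 1) * s + 2 ^ k + l))) •
        Finsupp.single (t ^ (2 ^ r - 1) * ∏ i ∈ Finset.Icc 1 (2 ^ r), a i) (1 : K) := by
  induction r generalizing a with
  | zero => simp [bal]
  | succ r ih =>
    rw [bal, ih, ih]
    rw [Finsupp.smul_single', Finsupp.smul_single', mul_one, mul_one, mulG_single,
      Finsupp.smul_single', mul_one]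
    have h1 : (1:ℕ) ≤ 2 ^ r := Nat.one_le_two_pow
    have h2 : 2 ^ (r + 1) = 2 ^ r + 2 ^ r := by rw [pow_succ]; omega
    have hgrp : (t ^ (2 ^ r - 1) * ∏ i ∈ Finset.Icc 1 (2 ^ r), a i) *
        (t ^ (2 ^ r - 1) * ∏ i ∈ Finset.Icc 1 (2 ^ r), a (2 ^ r + i)) * t
        = t ^ (2 ^ (r + 1) - 1) * ∏ i ∈ Finset.Icc 1 (2 ^ (r + 1)), a i := by
      rw [h2, prod_Icc_one_add,
        show 2 ^ r + 2 ^ r - 1 = (2 ^ r - 1) + (2 ^ r - 1) + 1 by omega,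
        pow_add, pow_add, pow_one]
      ac_rfl
    rw [hgrp]
    congr 1
    rw [Finset.prod_range_succ]
    have hr0 : r + 1 - r - 1 = 0 := by omega
    rw [hr0]
    simp only [pow_zero, Finset.prod_range_one, Nat.mul_zero, Nat.zero_add,
      mul_zero, zero_add]
    congr 1
    rw [← Finset.prod_mul_distrib]
    apply Finset.prod_congr rfl
    intro k hk
    rw [Finset.mem_range] at hk
    have hsplit : 2 ^ (r + 1 - k - 1) = 2 ^ (r - k - 1) + 2 ^ (r - k - 1) := by
      rw [show r + 1 - k - 1 = (r - k - 1) + 1 by omega, pow_succ]; omega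
    rw [hsplit, Finset.prod_range_add]
    congr 1
    apply Finset.prod_congr rfl
    intro s _
    have hpow : 2 ^ (k + 1) * 2 ^ (r - k - 1) = 2 ^ r := by
      rw [← pow_add]; congr 1; omega
    congr 1
    · congr 1
      apply Finset.prod_congr rfl
      intro q _
      congr 1
      rw [Nat.mul_add, hpow]
      omega
    · congr 1
      apply Finset.prod_congr rfl
      intro l _
      congr 1
      rw [Nat.mul_add, hpow]
      omega

/-- the balanced bracketing formula (F2). -/
theorem stmt3 {K G : Type*} [Field K] [CommGroup G] (f : G → G → K) (t : G)
    (r : ℕ) (hr : 1 ≤ r) (a : ℕ → G) :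
    bal f t a r =
      (∏ k ∈ Finset.range r, ∏ s ∈ Finset.range (2 ^ (r - k - 1)),
          f (t ^ (2 ^ k - 1) * ∏ q ∈ Finset.Icc 1 (2 ^ k), a (2 ^ (k + 1) * s + q))
            (t ^ (2 ^ k - 1) *
              ∏ l ∈ Finset.Icc 1 (2 ^ k), a (2 ^ (k + 1) * s + 2 ^ k + l))) •
        Finsupp.single (t ^ (2 ^ r - 1) * ∏ i ∈ Finset.Icc 1 (2 ^ r), a i) (1 : K) :=
  bal_formula f t r a
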